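/- arXiv:2006.08384 — 2 statements merged into one kernel-verified Lean document; each statement's English description precedes it below -/
import Mathlib

section
/- Let 1 < p < 2 and n ≥ 1. There exists a constant C = C(n, p) > 0 such that for all vectors a, b ∈ ℝⁿ not both zero, |a − b|² / (|a| + |b|)^{2−p} ≤ C (|a|^{p−2} a − |b|^{p−2} b) · (a − b). -/
open Real

private lemma subadd_aux {s t q : ℝ} (hs : 0 ≤ s) (ht : 0 ≤ t) (hq : 0 ≤ q) (hq1 : q ≤ 1) :
    (s+t)^q ≤ s^q + t^q := by
  have := NNReal.rpow_add_le_add_rpow s.toNNReal t.toNNReal hq hq1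
  have h2 : ((s.toNNReal + t.toNNReal : NNReal) : ℝ) = s + t := by
    simp [Real.coe_toNNReal, hs, ht]
  calc (s+t)^q = (((s.toNNReal + t.toNNReal : NNReal)):ℝ)^q := by rw [h2]
    _ = (((s.toNNReal + t.toNNReal)^q : NNReal) : ℝ) := by rw [NNReal.coe_rpow]
    _ ≤ (((s.toNNReal)^q + (t.toNNReal)^q : NNReal) : ℝ) := by exact_mod_cast this
    _ = s^q + t^q := by push_cast [NNReal.coe_rpow, Real.coe_toNNReal _ hs, Real.coe_toNNReal _ ht]; ring

private lemma concave_aux (p : ℝ) (hp1 : 1 < p) (hp2 : p < 2) {s t : ℝ} (ht : 0 ≤ t) (hts : t ≤ s) :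
    (p-1) * ((s+t)^(p-2)) * (s-t) ≤ s^(p-1) - t^(p-1) := by
  rcases eq_or_lt_of_le (ht.trans hts) with hs0 | hs
  · simp [← hs0] at hts ⊢
    have ht0 : t = 0 := le_antisymm hts ht
    simp [ht0, Real.zero_rpow (by linarith : p - 2 ≠ 0)]
  · have hstep1 : (s+t)^(p-2) ≤ s^(p-2) :=
      rpow_le_rpow_of_nonpos hs (by linarith) (by linarith)
    have hstep2 : (p-1) * (s^(p-2)) * (s-t) ≤ s^(p-1) - t^(p-1) := by
      have hx : -1 ≤ t/s - 1 := by
        have : 0 ≤ t/s := div_nonneg ht hs.le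
        linarith
      have hb := rpow_one_add_le_one_add_mul_self hx (by linarith : (0:ℝ) ≤ p-1) (by linarith)
      rw [add_sub_cancel] at hb
      have hts' : (t/s)^(p-1) = t^(p-1) / s^(p-1) := Real.div_rpow ht hs.le _
      have hsp1 : (0:ℝ) < s^(p-1) := rpow_pos_of_pos hs _
      have hmul : t^(p-1) ≤ s^(p-1) * (1 + (p-1)*(t/s-1)) := by
        rw [hts'] at hb
        calc t^(p-1) = s^(p-1) * (t^(p-1)/s^(p-1)) := by field_simp
          _ ≤ s^(p-1) * (1 + (p-1)*(t/s-1)) := mul_le_mul_of_nonneg_left hb hsp1.le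
      have hkey : s^(p-1) * (t/s - 1) = s^(p-2) * (t - s) := by
        have : s^(p-1) = s^(p-2) * s := by
          rw [← Real.rpow_add_one (ne_of_gt hs)]; ring_nf
        rw [this]; field_simp
      nlinarith [hmul, hkey]
    calc (p-1) * ((s+t)^(p-2)) * (s-t) ≤ (p-1) * (s^(p-2)) * (s-t) := by
          apply mul_le_mul_of_nonneg_right _ (by linarith)
          exact mul_le_mul_of_nonneg_left hstep1 (by linarith)
      _ ≤ s^(p-1) - t^(p-1) := hstep2

-- symmetric version of the "u = st" endpoint bound
private lemma endpoint1 (p : ℝ) (hp1 : 1 < p) (hp2 : p < 2) {s t : ℝ}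
    (hs : 0 ≤ s) (ht : 0 ≤ t) (hst : 0 < s + t) :
    (s-t)^2 ≤ (p-1)⁻¹ * (s+t)^(2-p) * ((s^(p-1) - t^(p-1)) * (s - t)) := by
  have hpow : (s+t)^(2-p) * (s+t)^(p-2) = 1 := by
    rw [← Real.rpow_add hst]; norm_num
  have main : ∀ s' t' : ℝ, 0 ≤ t' → t' ≤ s' → 0 < s' + t' →
      (s'-t')^2 ≤ (p-1)⁻¹ * (s'+t')^(2-p) * ((s'^(p-1) - t'^(p-1)) * (s' - t')) := by
    intro s' t' ht' hts' hst'
    have h := concave_aux p hp1 hp2 ht' hts'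
    have h2 : (p-1) * ((s'+t')^(p-2)) * (s'-t') * (s'-t') ≤ (s'^(p-1) - t'^(p-1)) * (s'-t') :=
      mul_le_mul_of_nonneg_right h (by linarith)
    have hpow' : (s'+t')^(2-p) * (s'+t')^(p-2) = 1 := by
      rw [← Real.rpow_add hst']; norm_num
    have hpos : (0:ℝ) < (p-1)⁻¹ * (s'+t')^(2-p) :=
      mul_pos (inv_pos.2 (show (0:ℝ) < p - 1 by linarith)) (rpow_pos_of_pos hst' _)
    have h3 := mul_le_mul_of_nonneg_left h2 hpos.le
    calc (s'-t')^2 = ((p-1)⁻¹ * (p-1)) * ((s'+t')^(2-p) * (s'+t')^(p-2)) * ((s'-t')*(s'-t')) := by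
          rw [inv_mul_cancel₀ (by linarith : p - 1 ≠ 0), hpow']; ring
      _ = (p-1)⁻¹ * (s'+t')^(2-p) * ((p-1) * ((s'+t')^(p-2)) * (s'-t') * (s'-t')) := by ring
      _ ≤ (p-1)⁻¹ * (s'+t')^(2-p) * ((s'^(p-1) - t'^(p-1)) * (s'-t')) := h3
  rcases le_total t s with h | h
  · exact main s t ht h hst
  · have := main t s hs h (by linarith)
    calc (s-t)^2 = (t-s)^2 := by ring
      _ ≤ (p-1)⁻¹ * (t+s)^(2-p) * ((t^(p-1) - s^(p-1)) * (t - s)) := this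
      _ = (p-1)⁻¹ * (s+t)^(2-p) * ((s^(p-1) - t^(p-1)) * (s - t)) := by rw [add_comm t s]; ring

private lemma endpoint2 (p : ℝ) (hp1 : 1 < p) (hp2 : p < 2) {s t : ℝ}
    (hs : 0 ≤ s) (ht : 0 ≤ t) (hst : 0 < s + t) :
    (s+t)^2 ≤ (p-1)⁻¹ * (s+t)^(2-p) * ((s^(p-1) + t^(p-1)) * (s + t)) := by
  have hsub : (s+t)^(p-1) ≤ s^(p-1) + t^(p-1) :=
    subadd_aux hs ht (by linarith) (by linarith)
  have hC1 : (1:ℝ) ≤ (p-1)⁻¹ := by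
    rw [le_inv_comm₀ one_pos (by linarith)]; linarith
  have hnn : (0:ℝ) ≤ s^(p-1) + t^(p-1) := by positivity
  have h1 : (s+t)^(p-1) ≤ (p-1)⁻¹ * (s^(p-1)+t^(p-1)) :=
    hsub.trans (le_mul_of_one_le_left hnn hC1)
  have key : (s+t)^(2-p) * (s+t)^(p-1) = s + t := by
    rw [← Real.rpow_add hst, show (2-p)+(p-1) = 1 by ring, Real.rpow_one]
  calc (s+t)^2 = ((s+t)^(2-p) * (s+t)^(p-1)) * (s+t) := by rw [key]; ring
    _ ≤ (s+t)^(2-p) * ((p-1)⁻¹ * (s^(p-1)+t^(p-1))) * (s+t) := by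
        apply mul_le_mul_of_nonneg_right _ hst.le
        exact mul_le_mul_of_nonneg_left h1 (rpow_nonneg hst.le _)
    _ = (p-1)⁻¹ * (s+t)^(2-p) * ((s^(p-1) + t^(p-1)) * (s + t)) := by ring

private lemma key_ineq (p : ℝ) (hp1 : 1 < p) (hp2 : p < 2) (s t u : ℝ)
    (hs : 0 ≤ s) (ht : 0 ≤ t) (hst : 0 < s + t) (hu : |u| ≤ s * t) :
    s^2 + t^2 - 2*u ≤ (p-1)⁻¹ * (s+t)^(2-p) *
      (s^(p-2)*s^2 + t^(p-2)*t^2 - (s^(p-2)+t^(p-2))*u) := by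
  have hps : ∀ x : ℝ, 0 ≤ x → x^(p-2) * x = x^(p-1) := by
    intro x hx
    rcases eq_or_lt_of_le hx with h0 | h0
    · simp [← h0, Real.zero_rpow (show p-1 ≠ 0 by intro h; linarith [sub_eq_zero.1 h])]
    · rw [← Real.rpow_add_one (ne_of_gt h0), show p-2+1 = p-1 by ring]
  set A := (p-1)⁻¹ * (s+t)^(2-p) with hA
  have hApos : 0 < A := mul_pos (inv_pos.2 (by linarith)) (rpow_pos_of_pos hst _)
  have e1 : s^(p-2)*s^2 = s^(p-1)*s := by rw [← hps s hs]; ring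
  have e2 : t^(p-2)*t^2 = t^(p-1)*t := by rw [← hps t ht]; ring
  have e3 : (s^(p-2)+t^(p-2))*(s*t) = s^(p-1)*t + t^(p-1)*s := by
    rw [← hps s hs, ← hps t ht]; ring
  have habs := abs_le.1 hu
  have E1 := endpoint1 p hp1 hp2 hs ht hst
  have E2 := endpoint2 p hp1 hp2 hs ht hst
  have E1R : s^2 + t^2 - 2*(s*t) ≤ A*(s^(p-1)*s + t^(p-1)*t) - A*((s^(p-1)*t + t^(p-1)*s)) := by
    have h := E1
    nlinarith [h]
  have E2R : s^2 + t^2 + 2*(s*t) ≤ A*(s^(p-1)*s + t^(p-1)*t) + A*((s^(p-1)*t + t^(p-1)*s)) := by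
    nlinarith [E2]
  have hY : A*((s^(p-2)+t^(p-2))*(s*t)) = A*(s^(p-1)*t + t^(p-1)*s) := by rw [e3]
  rcases eq_or_lt_of_le (mul_nonneg hs ht) with hst0 | hst0
  · have hu0 : u = 0 := by
      have : |u| ≤ 0 := by rw [← hst0] at hu; exact hu
      simpa using le_antisymm this (abs_nonneg u)
    rw [hu0, e1, e2]
    have : A*((s^(p-1)*t + t^(p-1)*s)) = 0 := by
      rw [← hY, ← hst0]; ring
    linarith [E1R, hst0.symm ▸ this]
  · -- s*t > 0
    have hYnn : 0 ≤ A*(s^(p-2)+t^(p-2)) :=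
      mul_nonneg hApos.le (by positivity)
    have hcross : A*(s^(p-2)+t^(p-2))*(s*t) = A*(s^(p-1)*t + t^(p-1)*s) := by
      rw [← e3]; ring
    rw [show s^(p-2)*s^2 + t^(p-2)*t^2 - (s^(p-2)+t^(p-2))*u
        = (s^(p-1)*s + t^(p-1)*t) - (s^(p-2)+t^(p-2))*u by rw [← e1, ← e2]]
    have h1 : 0 ≤ s*t - u := by linarith [habs.2]
    have h2 : 0 ≤ s*t + u := by linarith [habs.1]
    have s1 : 0 ≤ A*(s^(p-1)*s + t^(p-1)*t) - A*(s^(p-2)+t^(p-2))*(s*t) - (s^2+t^2-2*(s*t)) := by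
      rw [hcross]; linarith [E1R]
    have s2 : 0 ≤ A*(s^(p-1)*s + t^(p-1)*t) + A*(s^(p-2)+t^(p-2))*(s*t) - (s^2+t^2+2*(s*t)) := by
      rw [hcross]; linarith [E2R]
    nlinarith [mul_nonneg h1 s2, mul_nonneg h2 s1, hst0]

open scoped RealInnerProductSpace

theorem stmt_8 (n : ℕ) (hn : 1 ≤ n) (p : ℝ) (hp1 : 1 < p) (hp2 : p < 2) :
    ∃ C : ℝ, 0 < C ∧ ∀ a b : EuclideanSpace ℝ (Fin n), ¬(a = 0 ∧ b = 0) →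
      ‖a - b‖ ^ (2:ℝ) / (‖a‖ + ‖b‖) ^ (2 - p)
        ≤ C * ⟪‖a‖ ^ (p - 2) • a - ‖b‖ ^ (p - 2) • b, a - b⟫ := by
  refine ⟨(p-1)⁻¹, inv_pos.2 (by linarith), ?_⟩
  intro a b hab
  set s := ‖a‖ with hsdef
  set t := ‖b‖ with htdef
  have hs : 0 ≤ s := norm_nonneg a
  have ht : 0 ≤ t := norm_nonneg b
  have hst : 0 < s + t := by
    rcases not_and_or.1 hab with h | h
    · have : 0 < s := norm_pos_iff.2 h
      linarith
    · have : 0 < t := norm_pos_iff.2 h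
      linarith
  have hu : |⟪a, b⟫| ≤ s * t := abs_real_inner_le_norm a b
  set u := ⟪a, b⟫ with hudef
  have hnorm : ‖a - b‖ ^ (2:ℝ) = s^2 + t^2 - 2*u := by
    rw [show (2:ℝ) = ((2:ℕ):ℝ) by norm_num, Real.rpow_natCast]
    rw [@norm_sub_sq_real]
    ring
  have hinner : ⟪s ^ (p - 2) • a - t ^ (p - 2) • b, a - b⟫
      = s^(p-2)*s^2 + t^(p-2)*t^2 - (s^(p-2)+t^(p-2))*u := by
    simp only [inner_sub_left, inner_sub_right, real_inner_smul_left,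
      real_inner_self_eq_norm_sq, real_inner_comm a b]
    ring
  rw [div_le_iff₀ (Real.rpow_pos_of_pos hst _), hnorm, hinner]
  exact (key_ineq p hp1 hp2 s t u hs ht hst hu).trans_eq (by ring)
end

section
/- Let n ≥ 1, 0 < s < 1, 1 < p < ∞ with n > sp, and let F : ℝⁿ → ℝ be bounded and globally Lipschitz. Fix x₀ ∈ ℝⁿ, r > 0, 0 < ρ < r, and a function η ∈ C²_c(B_r(x₀)) with 0 ≤ η ≤ 1. Then for every ε > 0 there exists θ̃ > 0 such that for all 0 ≤ θ < θ̃ and all x ∈ B_ρ(x₀), | D_s^p F(x) − D_s^p (F + θη)(x) | < ε, where D_s^p v(x) = ∫_{ℝⁿ} |v(x) − v(y)|^p / |x − y|^{n+sp} dy. -/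
open MeasureTheory Metric Set


lemma aux_rpow_diff {p : ℝ} (hp : 1 ≤ p) {a b : ℝ} (ha : 0 ≤ a) (hb : 0 ≤ b) :
    |a ^ p - b ^ p| ≤ p * max a b ^ (p - 1) * |a - b| := by
  set M := max a b with hMdef
  have hM : 0 ≤ M := le_trans ha (le_max_left a b)
  have key : ∀ x ∈ Icc (0:ℝ) M,
      HasDerivWithinAt (fun t : ℝ => t ^ p) ((fun t : ℝ => p * t ^ (p-1)) x) (Icc 0 M) x :=
    fun x _ => (Real.hasDerivAt_rpow_const (Or.inr hp)).hasDerivWithinAt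
  have bound : ∀ x ∈ Icc (0:ℝ) M, ‖(fun t : ℝ => p * t ^ (p-1)) x‖ ≤ p * M ^ (p-1) := by
    intro x hx
    have h1 : x ^ (p-1) ≤ M ^ (p-1) := Real.rpow_le_rpow hx.1 hx.2 (by linarith)
    have h2 : (0:ℝ) ≤ x ^ (p-1) := Real.rpow_nonneg hx.1 _
    rw [Real.norm_eq_abs, abs_of_nonneg (by positivity)]
    have hp0 : (0:ℝ) ≤ p := by linarith
    exact mul_le_mul_of_nonneg_left h1 hp0
  have h := (convex_Icc (0:ℝ) M).norm_image_sub_le_of_norm_hasDerivWithin_le key bound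
      (mem_Icc.mpr ⟨hb, le_max_right a b⟩) (mem_Icc.mpr ⟨ha, le_max_left a b⟩)
  simpa [Real.norm_eq_abs] using h



lemma aux_near (n : ℕ) (hn : 1 ≤ n) {a : ℝ} (ha : -(n:ℝ) < a) :
    IntegrableOn (fun z : EuclideanSpace ℝ (Fin n) => ‖z‖ ^ a) (ball 0 1) := by
  have hmeas : Measurable (fun z : EuclideanSpace ℝ (Fin n) => ‖z‖ ^ a) :=
    measurable_norm.pow_const a
  rcases le_or_gt 0 a with ha0 | ha0
  · -- bounded case
    refine Measure.integrableOn_of_bounded measure_ball_lt_top.ne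
      hmeas.aestronglyMeasurable (M := 1) ?_
    filter_upwards [ae_restrict_mem measurableSet_ball] with z hz
    rw [Real.norm_eq_abs, abs_of_nonneg (Real.rpow_nonneg (norm_nonneg _) _)]
    exact Real.rpow_le_one (norm_nonneg _) (le_of_lt (mem_ball_zero_iff.mp hz)) ha0
  · -- singular case, layer cake
    have haz : a ≠ 0 := ha0.ne
    constructor
    · exact hmeas.aestronglyMeasurable
    · rw [hasFiniteIntegral_iff_norm]
      have hnn : ∀ z : EuclideanSpace ℝ (Fin n), ‖(‖z‖ ^ a)‖ = ‖z‖ ^ a := fun z =>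
        Real.norm_eq_abs _ ▸ abs_of_nonneg (Real.rpow_nonneg (norm_nonneg _) _)
      simp_rw [hnn]
      set μ := volume.restrict (ball (0 : EuclideanSpace ℝ (Fin n)) 1) with hμ
      rw [lintegral_eq_lintegral_meas_le μ
        (Filter.Eventually.of_forall fun z => Real.rpow_nonneg (norm_nonneg _) _)
        hmeas.aemeasurable]
      have hsub : ∀ t : ℝ, 0 < t →
          {z : EuclideanSpace ℝ (Fin n) | t ≤ ‖z‖ ^ a} ⊆ closedBall 0 (t ^ a⁻¹) := by
        intro t ht z hz
        simp only [mem_setOf_eq] at hz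
        have hz0 : z ≠ 0 := by
          rintro rfl
          rw [norm_zero, Real.zero_rpow haz] at hz; linarith
        have hzn : 0 < ‖z‖ := norm_pos_iff.mpr hz0
        have := Real.rpow_le_rpow_of_nonpos ht hz (by
          exact le_of_lt (inv_neg''.mpr ha0))
        rw [← Real.rpow_mul hzn.le, mul_inv_cancel₀ haz, Real.rpow_one] at this
        exact mem_closedBall_zero_iff.mpr this
      calc ∫⁻ t in Ioi (0:ℝ), μ {z | t ≤ ‖z‖ ^ a}
          ≤ ∫⁻ t in Ioc 0 1 ∪ Ioi 1, μ {z | t ≤ ‖z‖ ^ a} :=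
            lintegral_mono_set Ioi_subset_Ioc_union_Ioi
        _ ≤ (∫⁻ t in Ioc 0 1, μ {z | t ≤ ‖z‖ ^ a}) + ∫⁻ t in Ioi 1, μ {z | t ≤ ‖z‖ ^ a} :=
            lintegral_union_le _ _ _
        _ < ⊤ := by
            refine ENNReal.add_lt_top.2 ⟨?_, ?_⟩
            · calc (∫⁻ _ in Ioc (0:ℝ) 1, μ {z | _ ≤ ‖z‖ ^ a})
                  ≤ ∫⁻ _ in Ioc (0:ℝ) 1, volume (ball (0 : EuclideanSpace ℝ (Fin n)) 1) := by
                    refine setLIntegral_mono' measurableSet_Ioc fun t _ => ?_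
                    calc μ {z | t ≤ ‖z‖ ^ a} ≤ μ univ := measure_mono (subset_univ _)
                      _ = volume (ball (0 : EuclideanSpace ℝ (Fin n)) 1) := by
                          rw [hμ, Measure.restrict_apply_univ]
                _ < ⊤ := by
                    rw [setLIntegral_const]
                    exact ENNReal.mul_lt_top measure_ball_lt_top (by simp)
            · have hexp : a⁻¹ * n < -1 := by
                rw [inv_mul_eq_div, div_lt_iff_of_neg ha0]
                linarith
              calc (∫⁻ t in Ioi (1:ℝ), μ {z | t ≤ ‖z‖ ^ a})
                  ≤ ∫⁻ t in Ioi (1:ℝ), ENNReal.ofReal (t ^ (a⁻¹ * n)) *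
                      volume (ball (0 : EuclideanSpace ℝ (Fin n)) 1) := by
                    refine setLIntegral_mono' measurableSet_Ioi fun t ht => ?_
                    have ht0 : (0:ℝ) < t := lt_trans one_pos ht
                    calc μ {z | t ≤ ‖z‖ ^ a}
                        ≤ volume (closedBall (0 : EuclideanSpace ℝ (Fin n)) (t ^ a⁻¹)) :=
                          le_trans (Measure.restrict_apply_le _ _)
                            (measure_mono (hsub t ht0))
                      _ = ENNReal.ofReal ((t ^ a⁻¹) ^ Module.finrank ℝ (EuclideanSpace ℝ (Fin n))) *
                            volume (ball (0 : EuclideanSpace ℝ (Fin n)) 1) :=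
                          Measure.addHaar_closedBall _ _ (Real.rpow_nonneg ht0.le _)
                      _ = ENNReal.ofReal (t ^ (a⁻¹ * n)) *
                            volume (ball (0 : EuclideanSpace ℝ (Fin n)) 1) := by
                          rw [finrank_euclideanSpace_fin, ← Real.rpow_natCast (t ^ a⁻¹) n,
                            ← Real.rpow_mul ht0.le]
                _ < ⊤ := by
                    rw [lintegral_mul_const' _ _ measure_ball_lt_top.ne]
                    exact ENNReal.mul_lt_top
                      ((integrableOn_Ioi_rpow_of_lt hexp one_pos).setLIntegral_lt_top)
                      measure_ball_lt_top


lemma aux_W (n : ℕ) (hn : 1 ≤ n) {a b : ℝ} (ha : -(n:ℝ) < a) (hb : b < -(n:ℝ)) :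
    Integrable (fun z : EuclideanSpace ℝ (Fin n) => min (‖z‖ ^ a) (‖z‖ ^ b)) := by
  have hmeas : Measurable (fun z : EuclideanSpace ℝ (Fin n) => min (‖z‖ ^ a) (‖z‖ ^ b)) :=
    (measurable_norm.pow_const a).min (measurable_norm.pow_const b)
  have hnonneg : ∀ z : EuclideanSpace ℝ (Fin n), 0 ≤ min (‖z‖ ^ a) (‖z‖ ^ b) := fun z =>
    le_min (Real.rpow_nonneg (norm_nonneg _) _) (Real.rpow_nonneg (norm_nonneg _) _)
  rw [← integrableOn_univ, ← union_compl_self (ball (0 : EuclideanSpace ℝ (Fin n)) 1)]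
  apply IntegrableOn.union
  · refine Integrable.mono' (aux_near n hn ha) hmeas.aestronglyMeasurable ?_
    exact Filter.Eventually.of_forall fun z => by
      rw [Real.norm_eq_abs, abs_of_nonneg (hnonneg z)]; exact min_le_left _ _
  · have hb0 : b < 0 := lt_of_lt_of_le hb (by simp)
    have hint : Integrable (fun z : EuclideanSpace ℝ (Fin n) =>
        (2:ℝ) ^ (-b) * (1 + ‖z‖) ^ b) := by
      have := integrable_one_add_norm
        (E := EuclideanSpace ℝ (Fin n)) (μ := volume) (r := -b)
        (by rw [finrank_euclideanSpace_fin]; linarith)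
      simpa [neg_neg] using this.const_mul ((2:ℝ) ^ (-b))
    refine Integrable.mono' hint.integrableOn hmeas.aestronglyMeasurable ?_
    filter_upwards [ae_restrict_mem measurableSet_ball.compl] with z hz
    have hz1 : (1:ℝ) ≤ ‖z‖ := by
      simpa [mem_ball_zero_iff, not_lt] using hz
    have hz0 : (0:ℝ) < ‖z‖ := lt_of_lt_of_le one_pos hz1
    rw [Real.norm_eq_abs, abs_of_nonneg (hnonneg z)]
    calc min (‖z‖ ^ a) (‖z‖ ^ b) ≤ ‖z‖ ^ b := min_le_right _ _
      _ ≤ (2:ℝ) ^ (-b) * (1 + ‖z‖) ^ b := by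
          have h1 : (0:ℝ) < 1 + ‖z‖ := by linarith
          have h2 : 1 + ‖z‖ ≤ 2 * ‖z‖ := by linarith
          have h3 : (2 * ‖z‖ : ℝ) ^ b ≤ (1 + ‖z‖) ^ b :=
            Real.rpow_le_rpow_of_nonpos h1 h2 hb0.le
          have h4 : ((2:ℝ) * ‖z‖) ^ b = 2 ^ b * ‖z‖ ^ b :=
            Real.mul_rpow (by norm_num) (norm_nonneg _)
          have h5 : (2:ℝ) ^ (-b) * (2:ℝ) ^ b = 1 := by
            rw [← Real.rpow_add (by norm_num)]; simp
          calc ‖z‖ ^ b = (2:ℝ) ^ (-b) * ((2:ℝ)^b * ‖z‖ ^ b) := by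
                rw [← mul_assoc, h5, one_mul]
            _ = (2:ℝ) ^ (-b) * ((2*‖z‖:ℝ)) ^ b := by rw [h4]
            _ ≤ (2:ℝ) ^ (-b) * (1 + ‖z‖) ^ b := by
                exact mul_le_mul_of_nonneg_left h3 (Real.rpow_nonneg (by norm_num) _)



lemma aux_ratio {p q t : ℝ} (ht : 0 ≤ t) (hq : 0 < q) :
    min (t ^ p) 1 / t ^ q ≤ min (t ^ (p - q)) (t ^ (-q)) := by
  rcases eq_or_lt_of_le ht with h0 | ht0
  · rw [← h0, Real.zero_rpow hq.ne', div_zero]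
    exact le_min (Real.rpow_nonneg le_rfl _) (Real.rpow_nonneg le_rfl _)
  · have hT : 0 < t ^ q := Real.rpow_pos_of_pos ht0 q
    refine le_of_eq ?_
    rw [Real.rpow_sub ht0, Real.rpow_neg ht, ← one_div, ← min_div_div_right hT.le]

lemma aux_key1 {A B p : ℝ} (hA : 1 ≤ A) (hB : 1 ≤ B) (hp : 1 < p) :
    ∀ t : ℝ, 0 ≤ t → min A (B * t) ^ (p - 1) * min 1 (B * t) ≤
      A ^ (p - 1) * B ^ p * min (t ^ p) 1 := by
  intro t ht
  have hA0 : (0:ℝ) < A := lt_of_lt_of_le one_pos hA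
  have hB0 : (0:ℝ) < B := lt_of_lt_of_le one_pos hB
  have hp1 : (0:ℝ) ≤ p - 1 := by linarith
  have hmin0 : (0:ℝ) ≤ min A (B * t) := le_min hA0.le (by positivity)
  have hRnn : (0:ℝ) ≤ A ^ (p-1) * B ^ p :=
    mul_nonneg (Real.rpow_nonneg hA0.le _) (Real.rpow_nonneg hB0.le _)
  rcases eq_or_lt_of_le ht with h0 | ht0
  · rw [← h0, mul_zero]
    rw [min_eq_right hA0.le, Real.zero_rpow (by linarith : p - 1 ≠ 0), zero_mul]
    positivity
  · have hBt : (0:ℝ) < B * t := by positivity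
    rcases le_or_gt (B * t) 1 with h | h
    · have hti : t ≤ 1 := le_trans (le_mul_of_one_le_left ht hB) h
      have step1 : min A (B*t) ^ (p-1) * min 1 (B*t) ≤ (B*t) ^ (p-1) * (B*t) :=
        mul_le_mul (Real.rpow_le_rpow hmin0 (min_le_right _ _) hp1)
          (min_le_right _ _) (le_min one_pos.le hBt.le) (Real.rpow_nonneg hBt.le _)
      have step2 : (B*t) ^ (p-1) * (B*t) = (B*t) ^ p := by
        rw [← Real.rpow_add_one hBt.ne' (p-1)]; ring_nf
      have step3 : (B*t) ^ p = B ^ p * t ^ p := Real.mul_rpow hB0.le ht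
      have htp1 : t ^ p ≤ 1 := Real.rpow_le_one ht hti (by linarith)
      have hAp : (1:ℝ) ≤ A ^ (p-1) := Real.one_le_rpow hA hp1
      rw [min_eq_left htp1]
      calc min A (B*t) ^ (p-1) * min 1 (B*t) ≤ (B*t) ^ (p-1) * (B*t) := step1
        _ = B ^ p * t ^ p := by rw [step2, step3]
        _ ≤ A ^ (p-1) * B ^ p * t ^ p := by
            have h1 := Real.rpow_nonneg hB0.le p
            have h2 := Real.rpow_nonneg ht p
            nlinarith [mul_nonneg (sub_nonneg.mpr hAp) (mul_nonneg h1 h2)]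
    · have step1 : min A (B*t) ^ (p-1) * min 1 (B*t) ≤ A ^ (p-1) * 1 :=
        mul_le_mul (Real.rpow_le_rpow hmin0 (min_le_left _ _) hp1)
          (min_le_left _ _) (le_min one_pos.le hBt.le) (Real.rpow_nonneg hA0.le _)
      have step2 : (1:ℝ) ≤ B ^ p * min (t ^ p) 1 := by
        rcases le_or_gt 1 t with h1 | h1
        · rw [min_eq_right (Real.one_le_rpow h1 (by linarith))]
          simpa using Real.one_le_rpow hB (by linarith : (0:ℝ) ≤ p)
        · rw [min_eq_left (Real.rpow_le_one ht h1.le (by linarith))]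
          calc (1:ℝ) ≤ (B*t) ^ p := Real.one_le_rpow h.le (by linarith)
            _ = B ^ p * t ^ p := Real.mul_rpow hB0.le ht
      calc min A (B*t) ^ (p-1) * min 1 (B*t) ≤ A ^ (p-1) * 1 := step1
        _ ≤ A ^ (p-1) * (B ^ p * min (t ^ p) 1) :=
            mul_le_mul_of_nonneg_left step2 (Real.rpow_nonneg hA0.le _)
        _ = A ^ (p-1) * B ^ p * min (t ^ p) 1 := by ring

lemma aux_key2 {A B p : ℝ} (hA : 1 ≤ A) (hB : 1 ≤ B) (hp : 1 < p) :
    ∀ t : ℝ, 0 ≤ t → min A (B * t) ^ p ≤ A * (A ^ (p - 1) * B ^ p * min (t ^ p) 1) := by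
  intro t ht
  have hA0 : (0:ℝ) < A := lt_of_lt_of_le one_pos hA
  have hB0 : (0:ℝ) < B := lt_of_lt_of_le one_pos hB
  have hp1 : (0:ℝ) ≤ p - 1 := by linarith
  have hmin0 : (0:ℝ) ≤ min A (B * t) := le_min hA0.le (by positivity)
  have hAp : (1:ℝ) ≤ A ^ (p-1) := Real.one_le_rpow hA hp1
  rcases eq_or_lt_of_le ht with h0 | ht0
  · rw [← h0, mul_zero, min_eq_right hA0.le, Real.zero_rpow (by linarith : p ≠ 0)]
    positivity
  · have hBt : (0:ℝ) < B * t := by positivity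
    rcases le_or_gt (B * t) 1 with h | h
    · have hti : t ≤ 1 := le_trans (le_mul_of_one_le_left ht hB) h
      have htp1 : t ^ p ≤ 1 := Real.rpow_le_one ht hti (by linarith)
      rw [min_eq_left htp1]
      calc min A (B*t) ^ p ≤ (B*t) ^ p :=
            Real.rpow_le_rpow hmin0 (min_le_right _ _) (by linarith)
        _ = B ^ p * t ^ p := Real.mul_rpow hB0.le ht
        _ ≤ A * (A ^ (p-1) * B ^ p * t ^ p) := by
            have h1 := Real.rpow_nonneg hB0.le p
            have h2 := Real.rpow_nonneg ht p
            have hAA : (1:ℝ) ≤ A * A ^ (p-1) :=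
              le_trans hAp (le_mul_of_one_le_left (Real.rpow_nonneg hA0.le _) hA)
            nlinarith [mul_nonneg (sub_nonneg.mpr hAA) (mul_nonneg h1 h2)]
    · have step2 : (1:ℝ) ≤ B ^ p * min (t ^ p) 1 := by
        rcases le_or_gt 1 t with h1 | h1
        · rw [min_eq_right (Real.one_le_rpow h1 (by linarith))]
          simpa using Real.one_le_rpow hB (by linarith : (0:ℝ) ≤ p)
        · rw [min_eq_left (Real.rpow_le_one ht h1.le (by linarith))]
          calc (1:ℝ) ≤ (B*t) ^ p := Real.one_le_rpow h.le (by linarith)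
            _ = B ^ p * t ^ p := Real.mul_rpow hB0.le ht
      calc min A (B*t) ^ p ≤ A ^ p :=
            Real.rpow_le_rpow hmin0 (min_le_left _ _) (by linarith)
        _ = A ^ (p-1) * A := by rw [← Real.rpow_add_one hA0.ne' (p-1)]; ring_nf
        _ = A * (A ^ (p-1) * 1) := by ring
        _ ≤ A * (A ^ (p-1) * (B ^ p * min (t ^ p) 1)) := by
            have h1 : (0:ℝ) ≤ A ^ (p-1) := Real.rpow_nonneg hA0.le _
            gcongr
        _ = A * (A ^ (p-1) * B ^ p * min (t ^ p) 1) := by ring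


set_option maxHeartbeats 1000000 in
theorem stmt_15 (n : ℕ) (hn : 1 ≤ n) (s p : ℝ) (hs0 : 0 < s) (hs1 : s < 1)
    (hp : 1 < p) (hnsp : s * p < n)
    (F : EuclideanSpace ℝ (Fin n) → ℝ)
    (hFb : ∃ M : ℝ, ∀ x, |F x| ≤ M) (hFlip : ∃ L : NNReal, LipschitzWith L F)
    (x₀ : EuclideanSpace ℝ (Fin n)) (r ρ : ℝ) (hρ : 0 < ρ) (hρr : ρ < r)
    (η : EuclideanSpace ℝ (Fin n) → ℝ) (hη : ContDiff ℝ 2 η)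
    (hηsupp : tsupport η ⊆ Metric.ball x₀ r)
    (hη0 : ∀ x, 0 ≤ η x) (hη1 : ∀ x, η x ≤ 1) :
    ∀ ε : ℝ, 0 < ε → ∃ θt : ℝ, 0 < θt ∧ ∀ θ : ℝ, 0 ≤ θ → θ < θt →
      ∀ x ∈ Metric.ball x₀ ρ,
        |(∫ y, |F x - F y| ^ p / ‖x - y‖ ^ ((n : ℝ) + s * p)) -
          ∫ y, |(F x + θ * η x) - (F y + θ * η y)| ^ p / ‖x - y‖ ^ ((n : ℝ) + s * p)|
          < ε := by
  intro ε hε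
  obtain ⟨M, hM⟩ := hFb
  obtain ⟨L, hL⟩ := hFlip
  have hp0 : (0:ℝ) < p := lt_trans one_pos hp
  have hM0 : (0:ℝ) ≤ M := le_trans (abs_nonneg _) (hM 0)
  -- Lipschitz constant for η
  have hηc : HasCompactSupport η :=
    Metric.isCompact_of_isClosed_isBounded (isClosed_tsupport η)
      (Metric.isBounded_ball.subset hηsupp)
  obtain ⟨K, hK⟩ := hη.lipschitzWith_of_hasCompactSupport hηc (by norm_num)
  -- constants
  set q : ℝ := (n : ℝ) + s * p with hqdef
  have hq : 0 < q := by
    have : (1:ℝ) ≤ (n:ℝ) := by exact_mod_cast hn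
    have := mul_pos hs0 hp0
    simp only [hqdef]; linarith
  set a : ℝ := p - q with hadef
  set b : ℝ := -q with hbdef
  have ha : -(n:ℝ) < a := by
    have hps : 0 < p * (1 - s) := mul_pos hp0 (by linarith)
    simp only [hadef, hqdef]; nlinarith
  have hb : b < -(n:ℝ) := by
    have := mul_pos hs0 hp0
    simp only [hbdef, hqdef]; linarith
  set A : ℝ := 2 * M + 1 with hAdef
  set B : ℝ := (L : ℝ) + (K : ℝ) + 1 with hBdef
  have hA : (1:ℝ) ≤ A := by simp only [hAdef]; linarith
  have hB : (1:ℝ) ≤ B := by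
    have := L.coe_nonneg; have := K.coe_nonneg
    simp only [hBdef]; linarith
  have hA0 : (0:ℝ) < A := lt_of_lt_of_le one_pos hA
  have hB0 : (0:ℝ) < B := lt_of_lt_of_le one_pos hB
  set W : EuclideanSpace ℝ (Fin n) → ℝ := fun z => min (‖z‖ ^ a) (‖z‖ ^ b) with hWdef
  have hWnn : ∀ z, 0 ≤ W z := fun z =>
    le_min (Real.rpow_nonneg (norm_nonneg _) _) (Real.rpow_nonneg (norm_nonneg _) _)
  have hWint : Integrable W := aux_W n hn ha hb
  set I : ℝ := ∫ z, W z with hIdef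
  have hI0 : 0 ≤ I := integral_nonneg hWnn
  set C : ℝ := p * (A ^ (p - 1) * B ^ p) with hCdef
  have hC0 : 0 < C := by
    have := Real.rpow_pos_of_pos hA0 (p-1)
    have := Real.rpow_pos_of_pos hB0 p
    positivity
  refine ⟨min 1 (ε / (C * I + 1)), lt_min one_pos (div_pos hε (by positivity)), ?_⟩
  intro θ hθ0 hθlt x hx
  have hθ1 : θ ≤ 1 := le_of_lt (lt_of_lt_of_le hθlt (min_le_left _ _))
  -- pointwise bounds
  have hFc : Continuous F := hL.continuous
  have hec : Continuous η := hη.continuous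
  have hu : ∀ y, |F x - F y| ≤ min (2*M) ((L:ℝ) * ‖x - y‖) := by
    intro y
    refine le_min ?_ ?_
    · calc |F x - F y| ≤ |F x| + |F y| := abs_sub _ _
        _ ≤ 2 * M := by have := hM x; have := hM y; linarith
    · have := hL.dist_le_mul x y
      rwa [Real.dist_eq, dist_eq_norm] at this
  have he : ∀ y, |η x - η y| ≤ min 1 ((K:ℝ) * ‖x - y‖) := by
    intro y
    refine le_min ?_ ?_
    · have h1 := hη0 x; have h2 := hη1 x; have h3 := hη0 y; have h4 := hη1 y
      rw [abs_le]; constructor <;> linarith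
    · have := hK.dist_le_mul x y
      rwa [Real.dist_eq, dist_eq_norm] at this
  have hminadd : ∀ y, min (2*M) ((L:ℝ) * ‖x - y‖) + min 1 ((K:ℝ) * ‖x - y‖) ≤
      min A (B * ‖x - y‖) := by
    intro y
    have ht := norm_nonneg (x - y)
    refine le_min ?_ ?_
    · calc _ ≤ 2*M + 1 := add_le_add (min_le_left _ _) (min_le_left _ _)
        _ = A := rfl
    · calc _ ≤ (L:ℝ) * ‖x - y‖ + (K:ℝ) * ‖x - y‖ :=
            add_le_add (min_le_right _ _) (min_le_right _ _)
        _ ≤ B * ‖x - y‖ := by simp only [hBdef]; nlinarith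
  have hu' : ∀ y, |F x - F y| ≤ min A (B * ‖x - y‖) := by
    intro y
    refine le_trans (hu y) (le_trans ?_ (hminadd y))
    have : (0:ℝ) ≤ min 1 ((K:ℝ) * ‖x - y‖) := le_min one_pos.le (by positivity)
    linarith
  have hv : ∀ y, |(F x + θ * η x) - (F y + θ * η y)| ≤ min A (B * ‖x - y‖) := by
    intro y
    have h1 : (F x + θ * η x) - (F y + θ * η y) = (F x - F y) + θ * (η x - η y) := by ring
    calc |(F x + θ * η x) - (F y + θ * η y)| ≤ |F x - F y| + θ * |η x - η y| := by
          rw [h1]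
          refine le_trans (abs_add_le _ _) ?_
          rw [abs_mul, abs_of_nonneg hθ0]
      _ ≤ min (2*M) ((L:ℝ) * ‖x - y‖) + min 1 ((K:ℝ) * ‖x - y‖) := by
          refine add_le_add (hu y) ?_
          calc θ * |η x - η y| ≤ 1 * |η x - η y| :=
                mul_le_mul_of_nonneg_right hθ1 (abs_nonneg _)
            _ = |η x - η y| := one_mul _
            _ ≤ _ := he y
      _ ≤ min A (B * ‖x - y‖) := hminadd y
  -- the two integrands
  set f : EuclideanSpace ℝ (Fin n) → ℝ :=
    fun y => |F x - F y| ^ p / ‖x - y‖ ^ q with hfdef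
  set g : EuclideanSpace ℝ (Fin n) → ℝ :=
    fun y => |(F x + θ * η x) - (F y + θ * η y)| ^ p / ‖x - y‖ ^ q with hgdef
  have mf : Measurable f :=
    (((continuous_const.sub hFc).abs.measurable).pow_const p).div
      ((((continuous_const.sub continuous_id).norm).measurable).pow_const q)
  have mg : Measurable g :=
    (((continuous_const.sub (hFc.add (continuous_const.mul hec))).abs.measurable).pow_const
      p).div ((((continuous_const.sub continuous_id).norm).measurable).pow_const q)
  have hWx : Integrable (fun y => W (x - y)) := hWint.comp_sub_left x
  have hWratio : ∀ y, min (‖x - y‖ ^ p) 1 / ‖x - y‖ ^ q ≤ W (x - y) := by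
    intro y
    have := aux_ratio (p := p) (q := q) (t := ‖x - y‖) (norm_nonneg (x - y)) hq
    simpa [hWdef, hadef, hbdef] using this
  -- integrable bounds for f and g
  have hbound : ∀ (h : EuclideanSpace ℝ (Fin n) → ℝ),
      (∀ y, |h y| ≤ min A (B * ‖x - y‖)) →
      ∀ y, |h y| ^ p / ‖x - y‖ ^ q ≤ (A * (A ^ (p-1) * B ^ p)) * W (x - y) := by
    intro h hh y
    set t := ‖x - y‖ with htdef
    have ht : 0 ≤ t := norm_nonneg _
    calc |h y| ^ p / t ^ q ≤ min A (B * t) ^ p / t ^ q := by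
          have h1 : |h y| ^ p ≤ min A (B * t) ^ p :=
            Real.rpow_le_rpow (abs_nonneg _) (hh y) hp0.le
          have h2 : (0:ℝ) ≤ t ^ q := Real.rpow_nonneg ht q
          gcongr
      _ ≤ (A * (A ^ (p-1) * B ^ p)) * (min (t ^ p) 1 / t ^ q) := by
          rw [← mul_div_assoc]
          have h1 : min A (B * t) ^ p ≤ (A * (A ^ (p-1) * B ^ p)) * min (t ^ p) 1 := by
            calc min A (B * t) ^ p ≤ A * (A ^ (p-1) * B ^ p * min (t ^ p) 1) :=
                aux_key2 hA hB hp t ht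
              _ = (A * (A ^ (p-1) * B ^ p)) * min (t ^ p) 1 := by ring
          have h2 : (0:ℝ) ≤ t ^ q := Real.rpow_nonneg ht q
          gcongr
      _ ≤ (A * (A ^ (p-1) * B ^ p)) * W (x - y) := by
          have hc : (0:ℝ) ≤ A * (A ^ (p-1) * B ^ p) := by positivity
          exact mul_le_mul_of_nonneg_left (hWratio y) hc
  have hfnn : ∀ y, 0 ≤ f y := fun y => by
    simp only [hfdef]; positivity
  have hgnn : ∀ y, 0 ≤ g y := fun y => by
    simp only [hgdef]; positivity
  have hfint : Integrable f := by
    refine Integrable.mono' (hWx.const_mul (A * (A ^ (p-1) * B ^ p)))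
      mf.aestronglyMeasurable (Filter.Eventually.of_forall fun y => ?_)
    rw [Real.norm_eq_abs, abs_of_nonneg (hfnn y)]
    exact hbound _ hu' y
  have hgint : Integrable g := by
    refine Integrable.mono' (hWx.const_mul (A * (A ^ (p-1) * B ^ p)))
      mg.aestronglyMeasurable (Filter.Eventually.of_forall fun y => ?_)
    rw [Real.norm_eq_abs, abs_of_nonneg (hgnn y)]
    exact hbound _ hv y
  -- pointwise difference bound
  have hdiff : ∀ y, |f y - g y| ≤ θ * C * W (x - y) := by
    intro y
    set t := ‖x - y‖ with htdef
    have ht : 0 ≤ t := norm_nonneg _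
    set u := F x - F y with hudef
    set v := (F x + θ * η x) - (F y + θ * η y) with hvdef
    have habs : |u - v| = θ * |η x - η y| := by
      have : u - v = -(θ * (η x - η y)) := by simp only [hudef, hvdef]; ring
      rw [this, abs_neg, abs_mul, abs_of_nonneg hθ0]
    have step1 : abs (|u| ^ p - |v| ^ p) ≤
        p * (min A (B * t) ^ (p-1) * (θ * min 1 (B * t))) := by
      calc abs (|u| ^ p - |v| ^ p) ≤ p * max |u| |v| ^ (p-1) * abs (|u| - |v|) :=
            aux_rpow_diff hp.le (abs_nonneg _) (abs_nonneg _)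
        _ ≤ p * (min A (B * t) ^ (p-1) * (θ * min 1 (B * t))) := by
            rw [mul_assoc]
            refine mul_le_mul_of_nonneg_left ?_ hp0.le
            refine mul_le_mul ?_ ?_ (abs_nonneg _) (Real.rpow_nonneg ?_ _)
            · exact Real.rpow_le_rpow (le_trans (abs_nonneg _) (le_max_left _ _))
                (max_le (hu' y) (hv y)) (by linarith)
            · calc abs (|u| - |v|) ≤ |u - v| := abs_abs_sub_abs_le_abs_sub _ _
                _ = θ * |η x - η y| := habs
                _ ≤ θ * min 1 ((K:ℝ) * t) := mul_le_mul_of_nonneg_left (he y) hθ0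
                _ ≤ θ * min 1 (B * t) := by
                    refine mul_le_mul_of_nonneg_left (min_le_min le_rfl ?_) hθ0
                    have := L.coe_nonneg
                    simp only [hBdef]; nlinarith
            · exact le_min hA0.le (by positivity)
    have step2 : p * (min A (B * t) ^ (p-1) * (θ * min 1 (B * t))) ≤
        θ * C * min (t ^ p) 1 := by
      have h1 := aux_key1 hA hB hp t ht
      have hm1 : 0 ≤ min A (B*t) ^ (p-1) * min 1 (B * t) :=
        mul_nonneg (Real.rpow_nonneg (le_min hA0.le (by positivity)) _)
          (le_min one_pos.le (by positivity))
      calc p * (min A (B * t) ^ (p-1) * (θ * min 1 (B * t)))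
          = θ * (p * (min A (B*t) ^ (p-1) * min 1 (B * t))) := by ring
        _ ≤ θ * (p * (A ^ (p-1) * B ^ p * min (t ^ p) 1)) := by
            refine mul_le_mul_of_nonneg_left (mul_le_mul_of_nonneg_left h1 hp0.le) hθ0
        _ = θ * C * min (t ^ p) 1 := by simp only [hCdef]; ring
    have hfg : f y - g y = (|u| ^ p - |v| ^ p) / t ^ q := by
      simp only [hfdef, hgdef, hudef, hvdef, htdef, div_sub_div_same]
    rw [hfg, abs_div, abs_of_nonneg (Real.rpow_nonneg ht q)]
    calc abs (|u| ^ p - |v| ^ p) / t ^ q ≤ (θ * C * min (t ^ p) 1) / t ^ q := by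
          have h1 : abs (|u| ^ p - |v| ^ p) ≤ θ * C * min (t ^ p) 1 :=
            le_trans step1 step2
          have h2 : (0:ℝ) ≤ t ^ q := Real.rpow_nonneg ht q
          gcongr
      _ = (θ * C) * (min (t ^ p) 1 / t ^ q) := by rw [mul_div_assoc]
      _ ≤ θ * C * W (x - y) :=
          mul_le_mul_of_nonneg_left (hWratio y) (by positivity)
  -- conclude
  have key : |(∫ y, f y) - ∫ y, g y| ≤ θ * C * I := by
    rw [← integral_sub hfint hgint]
    calc |∫ y, f y - g y| ≤ ∫ y, |f y - g y| := by
          simpa [Real.norm_eq_abs] using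
            norm_integral_le_integral_norm (fun y => f y - g y)
      _ ≤ ∫ y, θ * C * W (x - y) := by
          refine integral_mono (hfint.sub hgint).abs ((hWx.const_mul _)) hdiff
      _ = θ * C * ∫ y, W (x - y) := integral_const_mul _ _
      _ = θ * C * I := by rw [integral_sub_left_eq_self W volume x]
  calc |(∫ y, f y) - ∫ y, g y| ≤ θ * C * I := key
    _ ≤ θ * (C * I + 1) := by nlinarith
    _ < min 1 (ε / (C * I + 1)) * (C * I + 1) := by
        have : (0:ℝ) < C * I + 1 := by positivity
        exact mul_lt_mul_of_pos_right hθlt this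
    _ ≤ (ε / (C * I + 1)) * (C * I + 1) := by
        have : (0:ℝ) < C * I + 1 := by positivity
        exact mul_le_mul_of_nonneg_right (min_le_right _ _) this.le
    _ = ε := div_mul_cancel₀ ε (by positivity)
end
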